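/- arXiv:1407.5606 — 2 statements merged into one kernel-verified Lean document; each statement's English description precedes it below -/
import Mathlib

section
/- Fourier cutoff approximation, Sobolev bound on the Fourier side (Lemma 4.7, second bound): Let q∈W^{2,∞}(ℝ) be a symmetric cutoff function supported in [−1,1] with q(p)=1 for |p|≤1/2 and q'(p)≤0 for p>0. Let Q∈W^{2,∞}(ℝ²) be supported in [−L,L]², and for m∈ℕ define Q_m through its partial Fourier transform by Q̂_m(p,y) := Q̂(p,y)·q(p/m). Then there exists a constant C, depending only on L and q, such that for every m∈ℕ: ‖Q̂_m‖_{W^{2,∞}} ≤ C ‖Q‖_{W^{2,∞}}. -/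
set_option maxHeartbeats 1000000
set_option synthInstance.maxHeartbeats 400000

open MeasureTheory Filter Complex

noncomputable section FCS

namespace FCSaux

variable {F : Type*} [NormedAddCommGroup F] [NormedSpace ℝ F]

lemma hasDerivAt_fst {f : ℝ × ℝ → F} {v : ℝ × ℝ} (hf : DifferentiableAt ℝ f v) :
    HasDerivAt (fun t => f (t, v.2)) (fderiv ℝ f v (1, 0)) v.1 := by
  have hc : HasDerivAt (fun t : ℝ => ((t, v.2) : ℝ × ℝ)) (1, 0) v.1 :=
    (hasDerivAt_id v.1).prodMk (hasDerivAt_const v.1 v.2)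
  have := hf.hasFDerivAt.comp_hasDerivAt v.1 (by simpa using hc)
  simpa [Function.comp_def] using this

lemma hasDerivAt_snd {f : ℝ × ℝ → F} {v : ℝ × ℝ} (hf : DifferentiableAt ℝ f v) :
    HasDerivAt (fun t => f (v.1, t)) (fderiv ℝ f v (0, 1)) v.2 := by
  have hc : HasDerivAt (fun t : ℝ => ((v.1, t) : ℝ × ℝ)) (0, 1) v.2 :=
    (hasDerivAt_const v.2 v.1).prodMk (hasDerivAt_id v.2)
  have := hf.hasFDerivAt.comp_hasDerivAt v.2 (by simpa using hc)
  simpa [Function.comp_def] using this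



/-- directional derivative in the first coordinate -/
lemma dir1 {F : Type*} [NormedAddCommGroup F] [NormedSpace ℝ F] {f : ℝ × ℝ → F} {v : ℝ × ℝ}
    (hf : DifferentiableAt ℝ f v) {a : F}
    (h : HasDerivAt (fun t => f (t, v.2)) a v.1) : fderiv ℝ f v (1, 0) = a := by
  have hc : HasDerivAt (fun t : ℝ => ((t, v.2) : ℝ × ℝ)) (1, 0) v.1 :=
    (hasDerivAt_id v.1).prodMk (hasDerivAt_const v.1 v.2)
  have h2 : HasDerivAt (fun t => f (t, v.2)) (fderiv ℝ f v (1, 0)) v.1 := by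
    have := hf.hasFDerivAt.comp_hasDerivAt v.1 (by simpa using hc)
    simpa [Function.comp_def] using this
  exact h2.unique h

lemma dir2 {F : Type*} [NormedAddCommGroup F] [NormedSpace ℝ F] {f : ℝ × ℝ → F} {v : ℝ × ℝ}
    (hf : DifferentiableAt ℝ f v) {a : F}
    (h : HasDerivAt (fun t => f (v.1, t)) a v.2) : fderiv ℝ f v (0, 1) = a := by
  have hc : HasDerivAt (fun t : ℝ => ((v.1, t) : ℝ × ℝ)) (0, 1) v.2 :=
    (hasDerivAt_const v.2 v.1).prodMk (hasDerivAt_id v.2)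
  have h2 : HasDerivAt (fun t => f (v.1, t)) (fderiv ℝ f v (0, 1)) v.2 := by
    have := hf.hasFDerivAt.comp_hasDerivAt v.2 (by simpa using hc)
    simpa [Function.comp_def] using this
  exact h2.unique h

lemma app_dir1 {F : Type*} [NormedAddCommGroup F] [NormedSpace ℝ F]
    {D : ℝ × ℝ → (ℝ × ℝ →L[ℝ] F)} {v : ℝ × ℝ}
    (hD : DifferentiableAt ℝ D v) (e : ℝ × ℝ) {a : F}
    (h : HasDerivAt (fun t => D (t, v.2) e) a v.1) : fderiv ℝ D v (1, 0) e = a := by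
  have h2 : HasDerivAt (fun t => D (t, v.2)) (fderiv ℝ D v (1, 0)) v.1 := by
    have hc : HasDerivAt (fun t : ℝ => ((t, v.2) : ℝ × ℝ)) (1, 0) v.1 :=
      (hasDerivAt_id v.1).prodMk (hasDerivAt_const v.1 v.2)
    have := hD.hasFDerivAt.comp_hasDerivAt v.1 (by simpa using hc)
    simpa [Function.comp_def] using this
  have h3 := h2.clm_apply (hasDerivAt_const v.1 e)
  simp only [map_zero, add_zero] at h3
  exact h3.unique h

lemma app_dir2 {F : Type*} [NormedAddCommGroup F] [NormedSpace ℝ F]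
    {D : ℝ × ℝ → (ℝ × ℝ →L[ℝ] F)} {v : ℝ × ℝ}
    (hD : DifferentiableAt ℝ D v) (e : ℝ × ℝ) {a : F}
    (h : HasDerivAt (fun t => D (v.1, t) e) a v.2) : fderiv ℝ D v (0, 1) e = a := by
  have h2 : HasDerivAt (fun t => D (v.1, t)) (fderiv ℝ D v (0, 1)) v.2 := by
    have hc : HasDerivAt (fun t : ℝ => ((v.1, t) : ℝ × ℝ)) (0, 1) v.2 :=
      (hasDerivAt_const v.2 v.1).prodMk (hasDerivAt_id v.2)
    have := hD.hasFDerivAt.comp_hasDerivAt v.2 (by simpa using hc)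
    simpa [Function.comp_def] using this
  have h3 := h2.clm_apply (hasDerivAt_const v.2 e)
  simp only [map_zero, add_zero] at h3
  exact h3.unique h

/-- operator norm on `ℝ×ℝ` bounded by the two directional values -/
lemma opnorm_le_dirs {F : Type*} [NormedAddCommGroup F] [NormedSpace ℝ F]
    (T : ℝ × ℝ →L[ℝ] F) : ‖T‖ ≤ ‖T (1, 0)‖ + ‖T (0, 1)‖ := by
  refine T.opNorm_le_bound (by positivity) fun w => ?_
  have hw : w = w.1 • ((1 : ℝ), (0 : ℝ)) + w.2 • ((0 : ℝ), (1 : ℝ)) := by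
    ext <;> simp
  have hTw : T w = w.1 • T (1, 0) + w.2 • T (0, 1) := by
    conv_lhs => rw [hw]
    rw [map_add, T.map_smul, T.map_smul]
  calc ‖T w‖ = ‖w.1 • T (1, 0) + w.2 • T (0, 1)‖ := by rw [hTw]
    _ ≤ ‖w.1 • T (1, 0)‖ + ‖w.2 • T (0, 1)‖ := norm_add_le _ _
    _ = |w.1| * ‖T (1, 0)‖ + |w.2| * ‖T (0, 1)‖ := by simp [norm_smul]
    _ ≤ ‖w‖ * ‖T (1, 0)‖ + ‖w‖ * ‖T (0, 1)‖ := by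
        gcongr
        · exact norm_fst_le w
        · exact norm_snd_le w
    _ = (‖T (1, 0)‖ + ‖T (0, 1)‖) * ‖w‖ := by ring

lemma norm_expc (p x : ℝ) : ‖Complex.exp (-(Complex.I * p * x))‖ = 1 := by
  rw [Complex.norm_exp]
  simp


/-- the complex exponential factor -/
lemma hasDerivAt_expc (x p : ℝ) :
    HasDerivAt (fun t : ℝ => Complex.exp (-(Complex.I * t * x)))
      (-(Complex.I * x) * Complex.exp (-(Complex.I * p * x))) p := by
  have h1 : HasDerivAt (fun t : ℝ => (t : ℂ)) 1 p := (hasDerivAt_id p).ofReal_comp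
  have h0 : HasDerivAt (fun t : ℝ => -(Complex.I * t * x)) (-(Complex.I * x)) p := by
    have := ((HasDerivAt.const_mul Complex.I h1).mul_const (x : ℂ)).neg
    simpa [mul_comm, Pi.neg_def] using this
  simpa [mul_comm] using h0.cexp

/-- derivative of `t ↦ (r (t/m) : ℂ)` -/
lemma hasDerivAt_compdiv {r : ℝ → ℝ} (hr : Differentiable ℝ r) (m : ℕ) (p : ℝ) :
    HasDerivAt (fun t : ℝ => ((r (t / m) : ℝ) : ℂ))
      (((deriv r (p / m) * (1 / (m : ℝ)) : ℝ) : ℂ)) p := by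
  have hg : HasDerivAt (fun t : ℝ => t / (m : ℝ)) (1 / (m : ℝ)) p :=
    (hasDerivAt_id p).div_const _
  have h := ((hr (p / m)).hasDerivAt).comp p hg
  have h2 : HasDerivAt (fun t : ℝ => r (t / m)) (deriv r (p / m) * (1 / (m : ℝ))) p := by
    simpa [Function.comp_def] using h
  exact h2.ofReal_comp

def dQy (Q : ℝ → ℝ → ℝ) (x y : ℝ) : ℝ :=
  fderiv ℝ (fun v : ℝ × ℝ => Q v.1 v.2) (x, y) (0, 1)

def d2Qyy (Q : ℝ → ℝ → ℝ) (x y : ℝ) : ℝ :=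
  fderiv ℝ (fderiv ℝ (fun v : ℝ × ℝ => Q v.1 v.2)) (x, y) (0, 1) (0, 1)

lemma hasDerivAt_Qy {Q : ℝ → ℝ → ℝ} (hQ : ContDiff ℝ 2 (fun v : ℝ × ℝ => Q v.1 v.2))
    (x y : ℝ) : HasDerivAt (fun t => Q x t) (dQy Q x y) y := by
  have hd : DifferentiableAt ℝ (fun v : ℝ × ℝ => Q v.1 v.2) (x, y) :=
    (hQ.differentiable (by norm_num)).differentiableAt
  exact hasDerivAt_snd hd

lemma contDiff_one_fderivQ {Q : ℝ → ℝ → ℝ} (hQ : ContDiff ℝ 2 (fun v : ℝ × ℝ => Q v.1 v.2)) :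
    ContDiff ℝ 1 (fderiv ℝ (fun v : ℝ × ℝ => Q v.1 v.2)) :=
  hQ.fderiv_right (le_of_eq one_add_one_eq_two)

lemma hasDerivAt_dQy {Q : ℝ → ℝ → ℝ} (hQ : ContDiff ℝ 2 (fun v : ℝ × ℝ => Q v.1 v.2))
    (x y : ℝ) : HasDerivAt (fun t => dQy Q x t) (d2Qyy Q x y) y := by
  have hD : DifferentiableAt ℝ (fderiv ℝ (fun v : ℝ × ℝ => Q v.1 v.2)) (x, y) :=
    ((contDiff_one_fderivQ hQ).differentiable one_ne_zero).differentiableAt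
  have h := (hasDerivAt_snd hD).clm_apply (hasDerivAt_const y ((0 : ℝ), (1 : ℝ)))
  simpa [dQy, d2Qyy] using h


variable (q : ℝ → ℝ) (Q : ℝ → ℝ → ℝ) (m : ℕ)

def gfun (x : ℝ) (v : ℝ × ℝ) : ℂ :=
  Complex.exp (-(Complex.I * v.1 * x)) * ((Q x v.2 : ℝ) : ℂ) * ((q (v.1 / m) : ℝ) : ℂ)

def Pp (x : ℝ) (v : ℝ × ℝ) : ℂ :=
  -(Complex.I * x) * Complex.exp (-(Complex.I * v.1 * x)) * ((Q x v.2 : ℝ) : ℂ) *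
      ((q (v.1 / m) : ℝ) : ℂ)
  + Complex.exp (-(Complex.I * v.1 * x)) * ((Q x v.2 : ℝ) : ℂ) *
      ((deriv q (v.1 / m) * (1 / (m : ℝ)) : ℝ) : ℂ)

def Py (x : ℝ) (v : ℝ × ℝ) : ℂ :=
  Complex.exp (-(Complex.I * v.1 * x)) * ((dQy Q x v.2 : ℝ) : ℂ) * ((q (v.1 / m) : ℝ) : ℂ)

def Ppp (x : ℝ) (v : ℝ × ℝ) : ℂ :=
  -(Complex.I * x) * (-(Complex.I * x)) * Complex.exp (-(Complex.I * v.1 * x)) *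
      ((Q x v.2 : ℝ) : ℂ) * ((q (v.1 / m) : ℝ) : ℂ)
  + -(Complex.I * x) * Complex.exp (-(Complex.I * v.1 * x)) * ((Q x v.2 : ℝ) : ℂ) *
      ((deriv q (v.1 / m) * (1 / (m : ℝ)) : ℝ) : ℂ)
  + -(Complex.I * x) * Complex.exp (-(Complex.I * v.1 * x)) * ((Q x v.2 : ℝ) : ℂ) *
      ((deriv q (v.1 / m) * (1 / (m : ℝ)) : ℝ) : ℂ)
  + Complex.exp (-(Complex.I * v.1 * x)) * ((Q x v.2 : ℝ) : ℂ) *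
      ((deriv (deriv q) (v.1 / m) * (1 / (m : ℝ)) * (1 / (m : ℝ)) : ℝ) : ℂ)

def Pmix (x : ℝ) (v : ℝ × ℝ) : ℂ :=
  -(Complex.I * x) * Complex.exp (-(Complex.I * v.1 * x)) * ((dQy Q x v.2 : ℝ) : ℂ) *
      ((q (v.1 / m) : ℝ) : ℂ)
  + Complex.exp (-(Complex.I * v.1 * x)) * ((dQy Q x v.2 : ℝ) : ℂ) *
      ((deriv q (v.1 / m) * (1 / (m : ℝ)) : ℝ) : ℂ)

def Pyy (x : ℝ) (v : ℝ × ℝ) : ℂ :=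
  Complex.exp (-(Complex.I * v.1 * x)) * ((d2Qyy Q x v.2 : ℝ) : ℂ) * ((q (v.1 / m) : ℝ) : ℂ)

variable {q Q}

lemma hasDerivAt_g_p (hq1 : Differentiable ℝ q) (x p y : ℝ) :
    HasDerivAt (fun t => gfun q Q m x (t, y)) (Pp q Q m x (p, y)) p := by
  have h := ((hasDerivAt_expc x p).mul_const ((Q x y : ℝ) : ℂ)).mul (hasDerivAt_compdiv hq1 m p)
  exact h

lemma hasDerivAt_g_y (hQ : ContDiff ℝ 2 (fun v : ℝ × ℝ => Q v.1 v.2)) (x p y : ℝ) :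
    HasDerivAt (fun t => gfun q Q m x (p, t)) (Py q Q m x (p, y)) y := by
  have hQy := (hasDerivAt_Qy hQ x y).ofReal_comp
  have h := (HasDerivAt.const_mul (Complex.exp (-(Complex.I * p * x))) hQy).mul_const
      ((q (p / m) : ℝ) : ℂ)
  exact h

lemma hasDerivAt_Pp_p (hq1 : Differentiable ℝ q) (hq2 : Differentiable ℝ (deriv q))
    (x p y : ℝ) : HasDerivAt (fun t => Pp q Q m x (t, y)) (Ppp q Q m x (p, y)) p := by
  have h1 := (((hasDerivAt_expc x p).mul_const ((Q x y : ℝ) : ℂ)).mul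
      (hasDerivAt_compdiv hq1 m p)).const_mul (-(Complex.I * (x : ℂ)))
  have h2 := (((hasDerivAt_expc x p).mul_const ((Q x y : ℝ) : ℂ)).mul
      (hasDerivAt_compdiv hq2 m p)).mul_const (((1 / (m : ℝ) : ℝ)) : ℂ)
  have h := h1.add h2
  have hfe : (fun t => Pp q Q m x (t, y)) = fun t : ℝ =>
      -(Complex.I * (x : ℂ)) * (Complex.exp (-(Complex.I * t * x)) * ((Q x y : ℝ) : ℂ) *
        ((q (t / m) : ℝ) : ℂ))
      + Complex.exp (-(Complex.I * t * x)) * ((Q x y : ℝ) : ℂ) *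
        ((deriv q (t / m) : ℝ) : ℂ) * (((1 / (m : ℝ) : ℝ)) : ℂ) := by
    funext t
    simp only [Pp]
    push_cast
    ring
  rw [hfe]
  convert h using 1
  · rfl
  · rfl
  simp only [Ppp]
  push_cast
  ring

lemma hasDerivAt_Pp_y (hQ : ContDiff ℝ 2 (fun v : ℝ × ℝ => Q v.1 v.2)) (x p y : ℝ) :
    HasDerivAt (fun t => Pp q Q m x (p, t)) (Pmix q Q m x (p, y)) y := by
  have hQy := (hasDerivAt_Qy hQ x y).ofReal_comp
  have h1 := (HasDerivAt.const_mul (-(Complex.I * (x : ℂ)) *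
      Complex.exp (-(Complex.I * p * x))) hQy).mul_const ((q (p / m) : ℝ) : ℂ)
  have h2 := (HasDerivAt.const_mul (Complex.exp (-(Complex.I * p * x))) hQy).mul_const
      (((deriv q (p / m) * (1 / (m : ℝ)) : ℝ) : ℂ))
  have h := h1.add h2
  have hfe : (fun t => Pp q Q m x (p, t)) = fun t =>
      (-(Complex.I * (x : ℂ)) * Complex.exp (-(Complex.I * p * x))) * ((Q x t : ℝ) : ℂ) *
        ((q (p / m) : ℝ) : ℂ)
      + Complex.exp (-(Complex.I * p * x)) * ((Q x t : ℝ) : ℂ) *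
        ((deriv q (p / m) * (1 / (m : ℝ)) : ℝ) : ℂ) := rfl
  rw [hfe]
  exact h

lemma hasDerivAt_Py_p (hq1 : Differentiable ℝ q) (x p y : ℝ) :
    HasDerivAt (fun t => Py q Q m x (t, y)) (Pmix q Q m x (p, y)) p := by
  have h := ((hasDerivAt_expc x p).mul_const ((dQy Q x y : ℝ) : ℂ)).mul
      (hasDerivAt_compdiv hq1 m p)
  exact h

lemma hasDerivAt_Py_y (hQ : ContDiff ℝ 2 (fun v : ℝ × ℝ => Q v.1 v.2)) (x p y : ℝ) :
    HasDerivAt (fun t => Py q Q m x (p, t)) (Pyy q Q m x (p, y)) y := by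
  have hQyy := (hasDerivAt_dQy hQ x y).ofReal_comp
  exact (HasDerivAt.const_mul (Complex.exp (-(Complex.I * p * x))) hQyy).mul_const
      ((q (p / m) : ℝ) : ℂ)


/-- joint smoothness of the integrand in `(x, (p,y))` -/
lemma contDiff_G (hq : ContDiff ℝ 2 q) (hQ : ContDiff ℝ 2 (fun v : ℝ × ℝ => Q v.1 v.2)) :
    ContDiff ℝ 2 (fun w : ℝ × (ℝ × ℝ) => gfun q Q m w.1 w.2) := by
  have h1 : ContDiff ℝ 2 (fun w : ℝ × (ℝ × ℝ) => Complex.exp (-(Complex.I * w.2.1 * w.1))) := by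
    apply Complex.contDiff_exp.comp
    have ha : ContDiff ℝ 2 (fun w : ℝ × (ℝ × ℝ) => ((w.2.1 : ℝ) : ℂ)) :=
      Complex.ofRealCLM.contDiff.comp (contDiff_snd.fst)
    have hb : ContDiff ℝ 2 (fun w : ℝ × (ℝ × ℝ) => ((w.1 : ℝ) : ℂ)) :=
      Complex.ofRealCLM.contDiff.comp contDiff_fst
    exact ((contDiff_const.mul ha).mul hb).neg
  have h2 : ContDiff ℝ 2 (fun w : ℝ × (ℝ × ℝ) => ((Q w.1 w.2.2 : ℝ) : ℂ)) :=
    Complex.ofRealCLM.contDiff.comp (hQ.comp (contDiff_fst.prodMk contDiff_snd.snd))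
  have h3 : ContDiff ℝ 2 (fun w : ℝ × (ℝ × ℝ) => ((q (w.2.1 / m) : ℝ) : ℂ)) :=
    Complex.ofRealCLM.contDiff.comp (hq.comp ((contDiff_snd.fst).div_const _))
  exact (h1.mul h2).mul h3

attribute [irreducible] gfun

lemma contDiff_g (hq : ContDiff ℝ 2 q) (hQ : ContDiff ℝ 2 (fun v : ℝ × ℝ => Q v.1 v.2))
    (x : ℝ) : ContDiff ℝ 2 (gfun q Q m x) :=
  (contDiff_G m hq hQ).comp (contDiff_const.prodMk contDiff_id)

lemma contDiff1_Dg (hq : ContDiff ℝ 2 q) (hQ : ContDiff ℝ 2 (fun v : ℝ × ℝ => Q v.1 v.2)) :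
    ContDiff ℝ 1 (fun w : ℝ × (ℝ × ℝ) => fderiv ℝ (gfun q Q m w.1) w.2) := by
  have h1 : ContDiff ℝ 2 (Function.uncurry
      (fun (w : ℝ × (ℝ × ℝ)) (v : ℝ × ℝ) => gfun q Q m w.1 v)) :=
    (contDiff_G m hq hQ).comp ((contDiff_fst.fst).prodMk contDiff_snd)
  exact ContDiff.fderiv h1 contDiff_snd (le_of_eq one_add_one_eq_two)

lemma cont_D2g (hq : ContDiff ℝ 2 q) (hQ : ContDiff ℝ 2 (fun v : ℝ × ℝ => Q v.1 v.2)) :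
    Continuous (fun w : ℝ × (ℝ × ℝ) => fderiv ℝ (fderiv ℝ (gfun q Q m w.1)) w.2) := by
  have h : ContDiff ℝ 0
      (fun w : ℝ × (ℝ × ℝ) => fderiv ℝ (fun v => fderiv ℝ (gfun q Q m w.1) v) w.2) := by
    apply ContDiff.fderiv (f := fun (w : ℝ × (ℝ × ℝ)) (v : ℝ × ℝ) => fderiv ℝ (gfun q Q m w.1) v)
      (g := fun w : ℝ × (ℝ × ℝ) => w.2)
    · exact (contDiff1_Dg m hq hQ).comp ((contDiff_fst.fst).prodMk contDiff_snd)
    · exact contDiff_snd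
    · exact le_of_eq (zero_add 1)
  exact h.continuous


lemma contDiff1_derivq {q : ℝ → ℝ} (hq : ContDiff ℝ 2 q) : ContDiff ℝ 1 (deriv q) := by
  have h2 : ContDiff ℝ ((1 : WithTop ℕ∞) + 1) q := by
    rw [one_add_one_eq_two]; exact hq
  exact (contDiff_succ_iff_deriv.mp h2).2.2

lemma Dg_apply1 (hq : ContDiff ℝ 2 q) (hQ : ContDiff ℝ 2 (fun v : ℝ × ℝ => Q v.1 v.2))
    (x : ℝ) (v : ℝ × ℝ) : fderiv ℝ (gfun q Q m x) v (1, 0) = Pp q Q m x v := by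
  have h := dir1 (f := gfun q Q m x)
    ((contDiff_g m hq hQ x).differentiable two_ne_zero).differentiableAt
    (hasDerivAt_g_p m (hq.differentiable two_ne_zero) x v.1 v.2)
  simpa using h

lemma Dg_apply2 (hq : ContDiff ℝ 2 q) (hQ : ContDiff ℝ 2 (fun v : ℝ × ℝ => Q v.1 v.2))
    (x : ℝ) (v : ℝ × ℝ) : fderiv ℝ (gfun q Q m x) v (0, 1) = Py q Q m x v := by
  have h := dir2 (f := gfun q Q m x)
    ((contDiff_g m hq hQ x).differentiable two_ne_zero).differentiableAt
    (hasDerivAt_g_y m hQ x v.1 v.2)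
  simpa using h

lemma contDiff1_Dgx (hq : ContDiff ℝ 2 q) (hQ : ContDiff ℝ 2 (fun v : ℝ × ℝ => Q v.1 v.2))
    (x : ℝ) : ContDiff ℝ 1 (fderiv ℝ (gfun q Q m x)) :=
  (contDiff_g m hq hQ x).fderiv_right (le_of_eq one_add_one_eq_two)

lemma D2g_11 (hq : ContDiff ℝ 2 q) (hQ : ContDiff ℝ 2 (fun v : ℝ × ℝ => Q v.1 v.2))
    (x : ℝ) (v : ℝ × ℝ) :
    fderiv ℝ (fderiv ℝ (gfun q Q m x)) v (1, 0) (1, 0) = Ppp q Q m x v := by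
  have hD := ((contDiff1_Dgx m hq hQ x).differentiable one_ne_zero).differentiableAt (x := v)
  have hfe : (fun t => fderiv ℝ (gfun q Q m x) (t, v.2) ((1 : ℝ), (0 : ℝ)))
      = fun t => Pp q Q m x (t, v.2) := funext fun t => Dg_apply1 m hq hQ x (t, v.2)
  have h := app_dir1 hD ((1 : ℝ), (0 : ℝ))
    (hfe ▸ hasDerivAt_Pp_p m (hq.differentiable two_ne_zero)
      ((contDiff1_derivq hq).differentiable one_ne_zero) x v.1 v.2)
  simpa using h

lemma D2g_12 (hq : ContDiff ℝ 2 q) (hQ : ContDiff ℝ 2 (fun v : ℝ × ℝ => Q v.1 v.2))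
    (x : ℝ) (v : ℝ × ℝ) :
    fderiv ℝ (fderiv ℝ (gfun q Q m x)) v (1, 0) (0, 1) = Pmix q Q m x v := by
  have hD := ((contDiff1_Dgx m hq hQ x).differentiable one_ne_zero).differentiableAt (x := v)
  have hfe : (fun t => fderiv ℝ (gfun q Q m x) (t, v.2) ((0 : ℝ), (1 : ℝ)))
      = fun t => Py q Q m x (t, v.2) := funext fun t => Dg_apply2 m hq hQ x (t, v.2)
  have h := app_dir1 hD ((0 : ℝ), (1 : ℝ))
    (hfe ▸ hasDerivAt_Py_p m (hq.differentiable two_ne_zero) x v.1 v.2)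
  simpa using h

lemma D2g_21 (hq : ContDiff ℝ 2 q) (hQ : ContDiff ℝ 2 (fun v : ℝ × ℝ => Q v.1 v.2))
    (x : ℝ) (v : ℝ × ℝ) :
    fderiv ℝ (fderiv ℝ (gfun q Q m x)) v (0, 1) (1, 0) = Pmix q Q m x v := by
  have hD := ((contDiff1_Dgx m hq hQ x).differentiable one_ne_zero).differentiableAt (x := v)
  have hfe : (fun t => fderiv ℝ (gfun q Q m x) (v.1, t) ((1 : ℝ), (0 : ℝ)))
      = fun t => Pp q Q m x (v.1, t) := funext fun t => Dg_apply1 m hq hQ x (v.1, t)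
  have h := app_dir2 hD ((1 : ℝ), (0 : ℝ))
    (hfe ▸ hasDerivAt_Pp_y m hQ x v.1 v.2)
  simpa using h

lemma D2g_22 (hq : ContDiff ℝ 2 q) (hQ : ContDiff ℝ 2 (fun v : ℝ × ℝ => Q v.1 v.2))
    (x : ℝ) (v : ℝ × ℝ) :
    fderiv ℝ (fderiv ℝ (gfun q Q m x)) v (0, 1) (0, 1) = Pyy q Q m x v := by
  have hD := ((contDiff1_Dgx m hq hQ x).differentiable one_ne_zero).differentiableAt (x := v)
  have hfe : (fun t => fderiv ℝ (gfun q Q m x) (v.1, t) ((0 : ℝ), (1 : ℝ)))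
      = fun t => Py q Q m x (v.1, t) := funext fun t => Dg_apply2 m hq hQ x (v.1, t)
  have h := app_dir2 hD ((0 : ℝ), (1 : ℝ))
    (hfe ▸ hasDerivAt_Py_y m hQ x v.1 v.2)
  simpa using h


lemma bnd2 {a b : ℂ} {A B : ℝ} (ha : ‖a‖ ≤ A) (hb : ‖b‖ ≤ B) : ‖a * b‖ ≤ A * B := by
  have hA : 0 ≤ A := (norm_nonneg a).trans ha
  rw [norm_mul]
  exact mul_le_mul ha hb (norm_nonneg b) hA

lemma bnd3 {a b c : ℂ} {A B C : ℝ} (ha : ‖a‖ ≤ A) (hb : ‖b‖ ≤ B) (hc : ‖c‖ ≤ C) :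
    ‖a * b * c‖ ≤ A * B * C := bnd2 (bnd2 ha hb) hc

lemma bnd4 {a b c d : ℂ} {A B C D : ℝ} (ha : ‖a‖ ≤ A) (hb : ‖b‖ ≤ B) (hc : ‖c‖ ≤ C)
    (hd : ‖d‖ ≤ D) : ‖a * b * c * d‖ ≤ A * B * C * D := bnd2 (bnd3 ha hb hc) hd

lemma norm_ofreal (r : ℝ) : ‖((r : ℝ) : ℂ)‖ = |r| := by
  rw [Complex.norm_real, Real.norm_eq_abs]

lemma norm_negIx (x : ℝ) : ‖-(Complex.I * (x : ℂ))‖ = |x| := by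
  rw [norm_neg, norm_mul, Complex.norm_I, one_mul, Complex.norm_real, Real.norm_eq_abs]

lemma inv_m_le {m : ℕ} (hm : 1 ≤ m) : |1 / (m : ℝ)| ≤ 1 := by
  have h1 : (1 : ℝ) ≤ (m : ℝ) := by exact_mod_cast hm
  have h2 : |1 / (m : ℝ)| = 1 / (m : ℝ) := abs_of_nonneg (by positivity)
  rw [h2, div_le_one (by linarith)]
  exact h1

variable {L S c0 c1 c2 : ℝ}

lemma norm_g_le (hc0 : ∀ t, |q t| ≤ c0) (hS0 : ∀ a b, |Q a b| ≤ S) (x : ℝ) (v : ℝ × ℝ) :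
    ‖gfun q Q m x v‖ ≤ S * c0 := by
  have h : ‖gfun q Q m x v‖ ≤ 1 * S * c0 := by
    rw [gfun]
    exact bnd3 (le_of_eq (norm_expc v.1 x)) ((norm_ofreal _).le.trans (hS0 _ _))
      ((norm_ofreal _).le.trans (hc0 _))
  linarith

lemma norm_Pp_le (hc0 : ∀ t, |q t| ≤ c0) (hc1 : ∀ t, |deriv q t| ≤ c1)
    (hS0 : ∀ a b, |Q a b| ≤ S) (hm : 1 ≤ m) {x : ℝ} (hx : |x| ≤ L) (v : ℝ × ℝ) :
    ‖Pp q Q m x v‖ ≤ L * S * c0 + S * c1 := by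
  have hc1' : (0 : ℝ) ≤ c1 := (abs_nonneg _).trans (hc1 0)
  have h1 : ‖-(Complex.I * (x : ℂ)) * Complex.exp (-(Complex.I * v.1 * x)) * ((Q x v.2 : ℝ) : ℂ)
      * ((q (v.1 / m) : ℝ) : ℂ)‖ ≤ L * 1 * S * c0 :=
    bnd4 ((norm_negIx x).le.trans hx) (le_of_eq (norm_expc v.1 x))
      ((norm_ofreal _).le.trans (hS0 _ _)) ((norm_ofreal _).le.trans (hc0 _))
  have h2 : ‖Complex.exp (-(Complex.I * v.1 * x)) * ((Q x v.2 : ℝ) : ℂ) *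
      ((deriv q (v.1 / m) * (1 / (m : ℝ)) : ℝ) : ℂ)‖ ≤ 1 * S * (c1 * 1) := by
    refine bnd3 (le_of_eq (norm_expc v.1 x)) ((norm_ofreal _).le.trans (hS0 _ _)) ?_
    rw [norm_ofreal, abs_mul]
    exact mul_le_mul (hc1 _) (inv_m_le hm) (abs_nonneg _) hc1'
  calc ‖Pp q Q m x v‖ ≤ ‖_‖ + ‖_‖ := norm_add_le _ _
    _ ≤ L * 1 * S * c0 + 1 * S * (c1 * 1) := add_le_add h1 h2
    _ = L * S * c0 + S * c1 := by ring

lemma norm_Py_le (hc0 : ∀ t, |q t| ≤ c0) (hS1 : ∀ a b, |dQy Q a b| ≤ S) (x : ℝ) (v : ℝ × ℝ) :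
    ‖Py q Q m x v‖ ≤ S * c0 := by
  have h : ‖Py q Q m x v‖ ≤ 1 * S * c0 :=
    bnd3 (le_of_eq (norm_expc v.1 x)) ((norm_ofreal _).le.trans (hS1 _ _))
      ((norm_ofreal _).le.trans (hc0 _))
  linarith

lemma norm_Pyy_le (hc0 : ∀ t, |q t| ≤ c0) (hS2 : ∀ a b, |d2Qyy Q a b| ≤ S) (x : ℝ)
    (v : ℝ × ℝ) : ‖Pyy q Q m x v‖ ≤ S * c0 := by
  have h : ‖Pyy q Q m x v‖ ≤ 1 * S * c0 :=
    bnd3 (le_of_eq (norm_expc v.1 x)) ((norm_ofreal _).le.trans (hS2 _ _))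
      ((norm_ofreal _).le.trans (hc0 _))
  linarith

lemma norm_Pmix_le (hc0 : ∀ t, |q t| ≤ c0) (hc1 : ∀ t, |deriv q t| ≤ c1)
    (hS1 : ∀ a b, |dQy Q a b| ≤ S) (hm : 1 ≤ m) {x : ℝ} (hx : |x| ≤ L) (v : ℝ × ℝ) :
    ‖Pmix q Q m x v‖ ≤ L * S * c0 + S * c1 := by
  have hc1' : (0 : ℝ) ≤ c1 := (abs_nonneg _).trans (hc1 0)
  have h1 : ‖-(Complex.I * (x : ℂ)) * Complex.exp (-(Complex.I * v.1 * x)) *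
      ((dQy Q x v.2 : ℝ) : ℂ) * ((q (v.1 / m) : ℝ) : ℂ)‖ ≤ L * 1 * S * c0 :=
    bnd4 ((norm_negIx x).le.trans hx) (le_of_eq (norm_expc v.1 x))
      ((norm_ofreal _).le.trans (hS1 _ _)) ((norm_ofreal _).le.trans (hc0 _))
  have h2 : ‖Complex.exp (-(Complex.I * v.1 * x)) * ((dQy Q x v.2 : ℝ) : ℂ) *
      ((deriv q (v.1 / m) * (1 / (m : ℝ)) : ℝ) : ℂ)‖ ≤ 1 * S * (c1 * 1) := by
    refine bnd3 (le_of_eq (norm_expc v.1 x)) ((norm_ofreal _).le.trans (hS1 _ _)) ?_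
    rw [norm_ofreal, abs_mul]
    exact mul_le_mul (hc1 _) (inv_m_le hm) (abs_nonneg _) hc1'
  calc ‖Pmix q Q m x v‖ ≤ ‖_‖ + ‖_‖ := norm_add_le _ _
    _ ≤ L * 1 * S * c0 + 1 * S * (c1 * 1) := add_le_add h1 h2
    _ = L * S * c0 + S * c1 := by ring

lemma norm_Ppp_le (hc0 : ∀ t, |q t| ≤ c0) (hc1 : ∀ t, |deriv q t| ≤ c1)
    (hc2 : ∀ t, |deriv (deriv q) t| ≤ c2) (hS0 : ∀ a b, |Q a b| ≤ S) (hm : 1 ≤ m)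
    {x : ℝ} (hx : |x| ≤ L) (v : ℝ × ℝ) :
    ‖Ppp q Q m x v‖ ≤ L * L * S * c0 + 2 * (L * S * c1) + S * c2 := by
  have hc1' : (0 : ℝ) ≤ c1 := (abs_nonneg _).trans (hc1 0)
  have hc2' : (0 : ℝ) ≤ c2 := (abs_nonneg _).trans (hc2 0)
  have hL : (0 : ℝ) ≤ L := (abs_nonneg x).trans hx
  have hIx : ‖-(Complex.I * (x : ℂ))‖ ≤ L := (norm_negIx x).le.trans hx
  have hE := fun (p : ℝ) => le_of_eq (norm_expc p x)
  have hmm := inv_m_le hm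
  have h1 : ‖-(Complex.I * (x : ℂ)) * (-(Complex.I * (x : ℂ))) *
      Complex.exp (-(Complex.I * v.1 * x)) * ((Q x v.2 : ℝ) : ℂ) * ((q (v.1 / m) : ℝ) : ℂ)‖
      ≤ L * L * 1 * S * c0 :=
    bnd2 (bnd4 hIx hIx (hE v.1) ((norm_ofreal _).le.trans (hS0 _ _)))
      ((norm_ofreal _).le.trans (hc0 _))
  have h2 : ‖-(Complex.I * (x : ℂ)) * Complex.exp (-(Complex.I * v.1 * x)) *
      ((Q x v.2 : ℝ) : ℂ) * ((deriv q (v.1 / m) * (1 / (m : ℝ)) : ℝ) : ℂ)‖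
      ≤ L * 1 * S * (c1 * 1) := by
    refine bnd4 hIx (hE v.1) ((norm_ofreal _).le.trans (hS0 _ _)) ?_
    rw [norm_ofreal, abs_mul]
    exact mul_le_mul (hc1 _) hmm (abs_nonneg _) hc1'
  have h3 : ‖Complex.exp (-(Complex.I * v.1 * x)) * ((Q x v.2 : ℝ) : ℂ) *
      ((deriv (deriv q) (v.1 / m) * (1 / (m : ℝ)) * (1 / (m : ℝ)) : ℝ) : ℂ)‖
      ≤ 1 * S * (c2 * 1 * 1) := by
    refine bnd3 (hE v.1) ((norm_ofreal _).le.trans (hS0 _ _)) ?_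
    rw [norm_ofreal, abs_mul, abs_mul]
    exact mul_le_mul (mul_le_mul (hc2 _) hmm (abs_nonneg _) hc2') hmm (abs_nonneg _)
      (by positivity)
  calc ‖Ppp q Q m x v‖ ≤ ‖_ + _ + _‖ + ‖_‖ := norm_add_le _ _
    _ ≤ (‖_ + _‖ + ‖_‖) + ‖_‖ := by gcongr; exact norm_add_le _ _
    _ ≤ ((‖_‖ + ‖_‖) + ‖_‖) + ‖_‖ := by gcongr; exact norm_add_le _ _
    _ ≤ ((L * L * 1 * S * c0 + L * 1 * S * (c1 * 1)) + L * 1 * S * (c1 * 1))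
          + 1 * S * (c2 * 1 * 1) := by
        gcongr <;> first | exact h1 | exact h2 | exact h3
    _ = L * L * S * c0 + 2 * (L * S * c1) + S * c2 := by ring


lemma norm_Dg_le (hq : ContDiff ℝ 2 q) (hQ : ContDiff ℝ 2 (fun v : ℝ × ℝ => Q v.1 v.2))
    (hc0 : ∀ t, |q t| ≤ c0) (hc1 : ∀ t, |deriv q t| ≤ c1)
    (hS0 : ∀ a b, |Q a b| ≤ S) (hS1 : ∀ a b, |dQy Q a b| ≤ S) (hm : 1 ≤ m)
    {x : ℝ} (hx : |x| ≤ L) (v : ℝ × ℝ) :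
    ‖fderiv ℝ (gfun q Q m x) v‖ ≤ (L * S * c0 + S * c1) + S * c0 := by
  refine (opnorm_le_dirs _).trans ?_
  rw [Dg_apply1 m hq hQ x v, Dg_apply2 m hq hQ x v]
  exact add_le_add (norm_Pp_le m hc0 hc1 hS0 hm hx v) (norm_Py_le m hc0 hS1 x v)

lemma norm_D2g_le (hq : ContDiff ℝ 2 q) (hQ : ContDiff ℝ 2 (fun v : ℝ × ℝ => Q v.1 v.2))
    (hc0 : ∀ t, |q t| ≤ c0) (hc1 : ∀ t, |deriv q t| ≤ c1)
    (hc2 : ∀ t, |deriv (deriv q) t| ≤ c2)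
    (hS0 : ∀ a b, |Q a b| ≤ S) (hS1 : ∀ a b, |dQy Q a b| ≤ S)
    (hS2 : ∀ a b, |d2Qyy Q a b| ≤ S) (hm : 1 ≤ m)
    {x : ℝ} (hx : |x| ≤ L) (v : ℝ × ℝ) :
    ‖fderiv ℝ (fderiv ℝ (gfun q Q m x)) v‖ ≤
      ((L * L * S * c0 + 2 * (L * S * c1) + S * c2) + (L * S * c0 + S * c1))
        + ((L * S * c0 + S * c1) + S * c0) := by
  refine (opnorm_le_dirs _).trans (add_le_add ?_ ?_)
  · refine (opnorm_le_dirs _).trans ?_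
    rw [D2g_11 m hq hQ x v, D2g_12 m hq hQ x v]
    exact add_le_add (norm_Ppp_le m hc0 hc1 hc2 hS0 hm hx v)
      (norm_Pmix_le m hc0 hc1 hS1 hm hx v)
  · refine (opnorm_le_dirs _).trans ?_
    rw [D2g_21 m hq hQ x v, D2g_22 m hq hQ x v]
    exact add_le_add (norm_Pmix_le m hc0 hc1 hS1 hm hx v) (norm_Pyy_le m hc0 hS2 x v)


lemma fderiv_zero_fun {E : Type*} [NormedAddCommGroup E] [NormedSpace ℝ E] :
    fderiv ℝ (0 : ℝ × ℝ → E) = 0 := by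
  funext v
  exact fderiv_const_apply 0

lemma norm_int_le {E : Type*} [NormedAddCommGroup E] [NormedSpace ℝ E] [CompleteSpace E]
    {ψ : ℝ → E} {B L : ℝ} (hL : 0 ≤ L) (hcont : Continuous ψ)
    (hzero : ∀ x ∉ Set.Icc (-L) L, ψ x = 0)
    (hbound : ∀ x ∈ Set.Icc (-L) L, ‖ψ x‖ ≤ B) :
    ‖∫ x, ψ x‖ ≤ 2 * L * B := by
  have h0 : (0 : ℝ) ∈ Set.Icc (-L) L := by constructor <;> linarith
  have hB : 0 ≤ B := (norm_nonneg _).trans (hbound 0 h0)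
  have hg : Integrable (Set.indicator (Set.Icc (-L) L) fun _ => B) :=
    (integrable_indicator_iff measurableSet_Icc).2
      (integrableOn_const measure_Icc_lt_top.ne)
  have hae : ∀ x, ‖ψ x‖ ≤ Set.indicator (Set.Icc (-L) L) (fun _ => B) x := by
    intro x
    by_cases hx : x ∈ Set.Icc (-L) L
    · rw [Set.indicator_of_mem hx]; exact hbound x hx
    · rw [Set.indicator_of_notMem hx, hzero x hx, norm_zero]
  calc ‖∫ x, ψ x‖ ≤ ∫ x, Set.indicator (Set.Icc (-L) L) (fun _ => B) x :=
        norm_integral_le_of_norm_le hg (Filter.Eventually.of_forall hae)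
    _ = (volume (Set.Icc (-L) L)).toReal • B := integral_indicator_const B measurableSet_Icc
    _ = 2 * L * B := by
        rw [Real.volume_Icc, ENNReal.toReal_ofReal (by linarith), smul_eq_mul]
        ring

lemma integrable_family {E : Type*} [NormedAddCommGroup E] [NormedSpace ℝ E]
    {ψ : ℝ → E} {L : ℝ} (hcont : Continuous ψ)
    (hzero : ∀ x ∉ Set.Icc (-L) L, ψ x = 0) : Integrable ψ := by
  refine hcont.integrable_of_hasCompactSupport ?_
  exact HasCompactSupport.intro isCompact_Icc hzero

lemma hasFDerivAt_int {E : Type*} [NormedAddCommGroup E] [NormedSpace ℝ E] [CompleteSpace E]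
    {φ : ℝ → ℝ × ℝ → E} {L B : ℝ}
    (hcont : Continuous fun w : ℝ × (ℝ × ℝ) => φ w.1 w.2)
    (hdiff : ∀ x v, HasFDerivAt (φ x) (fderiv ℝ (φ x) v) v)
    (hDcont : Continuous fun w : ℝ × (ℝ × ℝ) => fderiv ℝ (φ w.1) w.2)
    (hzero : ∀ x ∉ Set.Icc (-L) L, φ x = 0)
    (hbound : ∀ x ∈ Set.Icc (-L) L, ∀ v, ‖fderiv ℝ (φ x) v‖ ≤ B)
    (v₀ : ℝ × ℝ) :
    HasFDerivAt (fun v => ∫ x, φ x v) (∫ x, fderiv ℝ (φ x) v₀) v₀ := by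
  have hcx : ∀ v : ℝ × ℝ, Continuous fun x => φ x v := fun v =>
    hcont.comp (continuous_id.prodMk continuous_const)
  have hDcx : ∀ v : ℝ × ℝ, Continuous fun x => fderiv ℝ (φ x) v := fun v =>
    hDcont.comp (continuous_id.prodMk continuous_const)
  apply hasFDerivAt_integral_of_dominated_of_fderiv_le
    (bound := Set.indicator (Set.Icc (-L) L) fun _ => B)
    (F' := fun (v : ℝ × ℝ) (x : ℝ) => fderiv ℝ (φ x) v) (s := Set.univ) Filter.univ_mem
  · exact Filter.Eventually.of_forall fun v => (hcx v).aestronglyMeasurable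
  · refine integrable_family (L := L) (hcx v₀) (fun x hx => ?_)
    rw [hzero x hx]; rfl
  · exact (hDcx v₀).aestronglyMeasurable
  · refine Filter.Eventually.of_forall fun x => fun v _ => ?_
    by_cases hx : x ∈ Set.Icc (-L) L
    · rw [Set.indicator_of_mem hx]; exact hbound x hx v
    · rw [Set.indicator_of_notMem hx, hzero x hx, fderiv_zero_fun]
      simp
  · exact (integrable_indicator_iff measurableSet_Icc).2
      (integrableOn_const measure_Icc_lt_top.ne)
  · exact Filter.Eventually.of_forall fun x => fun v _ => hdiff x v


end FCSaux
end FCS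

open MeasureTheory Filter
open scoped BigOperators

/-- The partial Fourier transform in the first variable:
`Q̂(p,y) = ∫ Q(x,y) e^{-ipx} dx`. -/
noncomputable def partialFT (Q : ℝ → ℝ → ℝ) : ℝ × ℝ → ℂ :=
  fun py => ∫ x : ℝ, Complex.exp (-(Complex.I * (py.1 : ℂ) * (x : ℂ))) * (Q x py.2 : ℂ)

/-- The `W^{2,∞}` Sobolev norm: sum of the sup norms of the iterated derivatives
of order at most `2`. -/
noncomputable def sobNormTwo {E' F' : Type*} [NormedAddCommGroup E'] [NormedSpace ℝ E']
    [NormedAddCommGroup F'] [NormedSpace ℝ F'] (f : E' → F') : ℝ :=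
  ∑ n ∈ Finset.range 3, ⨆ x, ‖iteratedFDeriv ℝ n f x‖

/-- **Fourier cutoff approximation, Sobolev bound on the Fourier side** (Lemma 4.7, second
bound).  For a fixed smooth cutoff `q` (supported in `[-1,1]`, symmetric, `≡ 1` on
`[-1/2,1/2]`, nonincreasing on the right half line) and any `L > 0`, there is
`C = C(L,q) > 0` such that for every `Q ∈ W^{2,∞}(ℝ²)` supported in `[-L,L]²` and every
`m ≥ 1`, the partial Fourier transform `Q̂_m(p,y) = Q̂(p,y) q(p/m)` satisfies
`‖Q̂_m‖_{W^{2,∞}} ≤ C ‖Q‖_{W^{2,∞}}`. -/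
theorem fourier_cutoff_sobolev
    (q : ℝ → ℝ) (hq : ContDiff ℝ 2 q)
    (hq_supp : Function.support q ⊆ Set.Icc (-1 : ℝ) 1)
    (hq_symm : ∀ p : ℝ, q (-p) = q p)
    (hq_one : ∀ p : ℝ, |p| ≤ 1 / 2 → q p = 1)
    (hq_mono : ∀ p : ℝ, 0 < p → deriv q p ≤ 0)
    (L : ℝ) (hL : 0 < L) :
    ∃ C > (0 : ℝ), ∀ Q : ℝ → ℝ → ℝ,
      ContDiff ℝ 2 (fun v : ℝ × ℝ => Q v.1 v.2) →
      Function.support (fun v : ℝ × ℝ => Q v.1 v.2) ⊆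
        Set.Icc (-L) L ×ˢ Set.Icc (-L) L →
      ∀ m : ℕ, 1 ≤ m →
        sobNormTwo (fun py : ℝ × ℝ => partialFT Q py * (q (py.1 / m) : ℂ))
          ≤ C * sobNormTwo (fun v : ℝ × ℝ => Q v.1 v.2) := by
  classical
  -- bounds for the cutoff and its derivatives
  have hq_cs : HasCompactSupport q :=
    HasCompactSupport.intro isCompact_Icc fun x hx => by
      by_contra h
      exact hx (hq_supp h)
  obtain ⟨c0, hc0n⟩ := hq_cs.exists_bound_of_continuous hq.continuous
  obtain ⟨c1, hc1n⟩ := hq_cs.deriv.exists_bound_of_continuous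
    (FCSaux.contDiff1_derivq hq).continuous
  obtain ⟨c2, hc2n⟩ := hq_cs.deriv.deriv.exists_bound_of_continuous
    ((FCSaux.contDiff1_derivq hq).continuous_deriv le_rfl)
  have hc0 : ∀ t, |q t| ≤ c0 := fun t => by rw [← Real.norm_eq_abs]; exact hc0n t
  have hc1 : ∀ t, |deriv q t| ≤ c1 := fun t => by rw [← Real.norm_eq_abs]; exact hc1n t
  have hc2 : ∀ t, |deriv (deriv q) t| ≤ c2 := fun t => by rw [← Real.norm_eq_abs]; exact hc2n t
  have hc0nn : (0 : ℝ) ≤ c0 := (abs_nonneg _).trans (hc0 0)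
  have hc1nn : (0 : ℝ) ≤ c1 := (abs_nonneg _).trans (hc1 0)
  have hc2nn : (0 : ℝ) ≤ c2 := (abs_nonneg _).trans (hc2 0)
  -- the constant
  set K : ℝ := c0 + ((L * c0 + c1) + c0) +
      (((L * L * c0 + 2 * (L * c1) + c2) + (L * c0 + c1)) + ((L * c0 + c1) + c0)) with hK_def
  have hKnn : 0 ≤ K := by
    have h1 : 0 ≤ L * c0 := mul_nonneg hL.le hc0nn
    have h2 : 0 ≤ L * c1 := mul_nonneg hL.le hc1nn
    have h3 : 0 ≤ L * L * c0 := mul_nonneg (mul_nonneg hL.le hL.le) hc0nn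
    simp only [hK_def]
    nlinarith
  refine ⟨1 + 2 * L * K, by nlinarith, ?_⟩
  intro Q hQc hQs m hm
  -- bounds for Q
  set S : ℝ := sobNormTwo (fun v : ℝ × ℝ => Q v.1 v.2) with hS_def
  have hQcs : HasCompactSupport (fun v : ℝ × ℝ => Q v.1 v.2) :=
    HasCompactSupport.intro (isCompact_Icc.prod isCompact_Icc) fun v hv => by
      by_contra h
      exact hv (hQs h)
  have hsup : ∀ n : ℕ, (n : WithTop ℕ∞) ≤ 2 → ∀ v : ℝ × ℝ,
      ‖iteratedFDeriv ℝ n (fun v : ℝ × ℝ => Q v.1 v.2) v‖ ≤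
        ⨆ w, ‖iteratedFDeriv ℝ n (fun v : ℝ × ℝ => Q v.1 v.2) w‖ := by
    intro n hn v
    obtain ⟨B, hB⟩ := (hQcs.iteratedFDeriv n).exists_bound_of_continuous
      (hQc.continuous_iteratedFDeriv hn)
    exact le_ciSup ⟨B, by rintro r ⟨w, rfl⟩; exact hB w⟩ v
  have hSsum : S = (⨆ w, ‖iteratedFDeriv ℝ 0 (fun v : ℝ × ℝ => Q v.1 v.2) w‖)
      + (⨆ w, ‖iteratedFDeriv ℝ 1 (fun v : ℝ × ℝ => Q v.1 v.2) w‖)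
      + (⨆ w, ‖iteratedFDeriv ℝ 2 (fun v : ℝ × ℝ => Q v.1 v.2) w‖) := by
    simp only [hS_def, sobNormTwo]
    rw [Finset.sum_range_succ, Finset.sum_range_succ, Finset.sum_range_one]
  have ht0 : 0 ≤ ⨆ w, ‖iteratedFDeriv ℝ 0 (fun v : ℝ × ℝ => Q v.1 v.2) w‖ :=
    Real.iSup_nonneg fun w => norm_nonneg _
  have ht1 : 0 ≤ ⨆ w, ‖iteratedFDeriv ℝ 1 (fun v : ℝ × ℝ => Q v.1 v.2) w‖ :=
    Real.iSup_nonneg fun w => norm_nonneg _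
  have ht2 : 0 ≤ ⨆ w, ‖iteratedFDeriv ℝ 2 (fun v : ℝ × ℝ => Q v.1 v.2) w‖ :=
    Real.iSup_nonneg fun w => norm_nonneg _
  have hSnn : 0 ≤ S := by rw [hSsum]; linarith
  have hQ0 : ∀ v : ℝ × ℝ, ‖Q v.1 v.2‖ ≤ S := by
    intro v
    have h := hsup 0 (by norm_num) v
    rw [norm_iteratedFDeriv_zero] at h
    rw [hSsum]; linarith
  have hQ1 : ∀ v : ℝ × ℝ, ‖fderiv ℝ (fun v : ℝ × ℝ => Q v.1 v.2) v‖ ≤ S := by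
    intro v
    have h := hsup 1 (by norm_num) v
    have e : ‖fderiv ℝ (fun v : ℝ × ℝ => Q v.1 v.2) v‖
        = ‖iteratedFDeriv ℝ 1 (fun v : ℝ × ℝ => Q v.1 v.2) v‖ := by
      rw [← norm_iteratedFDeriv_fderiv, norm_iteratedFDeriv_zero]
    rw [e]
    rw [hSsum]; linarith
  have hQ2 : ∀ v : ℝ × ℝ, ‖fderiv ℝ (fderiv ℝ (fun v : ℝ × ℝ => Q v.1 v.2)) v‖ ≤ S := by
    intro v
    have h := hsup 2 (by norm_num) v
    have e : ‖fderiv ℝ (fderiv ℝ (fun v : ℝ × ℝ => Q v.1 v.2)) v‖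
        = ‖iteratedFDeriv ℝ 2 (fun v : ℝ × ℝ => Q v.1 v.2) v‖ := by
      rw [← norm_iteratedFDeriv_fderiv, ← norm_iteratedFDeriv_fderiv,
        norm_iteratedFDeriv_zero]
    rw [e]
    rw [hSsum]; linarith
  have hnorm01 : ‖((0 : ℝ), (1 : ℝ))‖ = 1 := by
    rw [Prod.norm_def]
    simp
  have hS0 : ∀ a b : ℝ, |Q a b| ≤ S := fun a b => by
    have := hQ0 (a, b); rwa [Real.norm_eq_abs] at this
  have hS1 : ∀ a b : ℝ, |FCSaux.dQy Q a b| ≤ S := by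
    intro a b
    rw [← Real.norm_eq_abs]
    calc ‖FCSaux.dQy Q a b‖
        ≤ ‖fderiv ℝ (fun v : ℝ × ℝ => Q v.1 v.2) (a, b)‖ * ‖((0 : ℝ), (1 : ℝ))‖ :=
          ContinuousLinearMap.le_opNorm _ _
      _ = ‖fderiv ℝ (fun v : ℝ × ℝ => Q v.1 v.2) (a, b)‖ := by rw [hnorm01, mul_one]
      _ ≤ S := hQ1 (a, b)
  have hS2 : ∀ a b : ℝ, |FCSaux.d2Qyy Q a b| ≤ S := by
    intro a b
    rw [← Real.norm_eq_abs]
    calc ‖FCSaux.d2Qyy Q a b‖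
        ≤ ‖fderiv ℝ (fderiv ℝ (fun v : ℝ × ℝ => Q v.1 v.2)) (a, b) (0, 1)‖
            * ‖((0 : ℝ), (1 : ℝ))‖ := ContinuousLinearMap.le_opNorm _ _
      _ = ‖fderiv ℝ (fderiv ℝ (fun v : ℝ × ℝ => Q v.1 v.2)) (a, b) (0, 1)‖ := by
          rw [hnorm01, mul_one]
      _ ≤ ‖fderiv ℝ (fderiv ℝ (fun v : ℝ × ℝ => Q v.1 v.2)) (a, b)‖
            * ‖((0 : ℝ), (1 : ℝ))‖ := ContinuousLinearMap.le_opNorm _ _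
      _ = ‖fderiv ℝ (fderiv ℝ (fun v : ℝ × ℝ => Q v.1 v.2)) (a, b)‖ := by
          rw [hnorm01, mul_one]
      _ ≤ S := hQ2 (a, b)
  -- the integrand family and its properties
  have hGc : Continuous fun w : ℝ × (ℝ × ℝ) => FCSaux.gfun q Q m w.1 w.2 :=
    (FCSaux.contDiff_G m hq hQc).continuous
  have hDGc : Continuous fun w : ℝ × (ℝ × ℝ) => fderiv ℝ (FCSaux.gfun q Q m w.1) w.2 :=
    (FCSaux.contDiff1_Dg m hq hQc).continuous
  have hD2Gc : Continuous fun w : ℝ × (ℝ × ℝ) =>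
      fderiv ℝ (fderiv ℝ (FCSaux.gfun q Q m w.1)) w.2 := FCSaux.cont_D2g m hq hQc
  have hgzero : ∀ x ∉ Set.Icc (-L) L, FCSaux.gfun q Q m x = 0 := by
    intro x hx
    funext v
    have hQ0 : Q x v.2 = 0 := by
      by_contra h
      have hmem : (x, v.2) ∈ Function.support (fun v : ℝ × ℝ => Q v.1 v.2) := h
      exact hx (hQs hmem).1
    simp only [FCSaux.gfun, hQ0]
    simp
  have hDgzero : ∀ x ∉ Set.Icc (-L) L, fderiv ℝ (FCSaux.gfun q Q m x) = 0 := fun x hx => by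
    rw [hgzero x hx, FCSaux.fderiv_zero_fun]
  have hdiff1 : ∀ (x : ℝ) (v : ℝ × ℝ),
      HasFDerivAt (FCSaux.gfun q Q m x) (fderiv ℝ (FCSaux.gfun q Q m x) v) v := fun x v =>
    (((FCSaux.contDiff_g m hq hQc x).differentiable two_ne_zero) v).hasFDerivAt
  have hdiff2 : ∀ (x : ℝ) (v : ℝ × ℝ), HasFDerivAt (fderiv ℝ (FCSaux.gfun q Q m x))
      (fderiv ℝ (fderiv ℝ (FCSaux.gfun q Q m x)) v) v := fun x v =>
    (((FCSaux.contDiff1_Dgx m hq hQc x).differentiable one_ne_zero) v).hasFDerivAt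
  have hbound1 : ∀ x ∈ Set.Icc (-L) L, ∀ v : ℝ × ℝ,
      ‖fderiv ℝ (FCSaux.gfun q Q m x) v‖ ≤ (L * S * c0 + S * c1) + S * c0 := by
    intro x hx v
    exact FCSaux.norm_Dg_le m hq hQc hc0 hc1 hS0 hS1 hm (abs_le.mpr ⟨hx.1, hx.2⟩) v
  have hbound2 : ∀ x ∈ Set.Icc (-L) L, ∀ v : ℝ × ℝ,
      ‖fderiv ℝ (fderiv ℝ (FCSaux.gfun q Q m x)) v‖ ≤
        ((L * L * S * c0 + 2 * (L * S * c1) + S * c2) + (L * S * c0 + S * c1))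
          + ((L * S * c0 + S * c1) + S * c0) := by
    intro x hx v
    exact FCSaux.norm_D2g_le m hq hQc hc0 hc1 hc2 hS0 hS1 hS2 hm (abs_le.mpr ⟨hx.1, hx.2⟩) v
  -- differentiating under the integral
  have hF1 : ∀ v₀ : ℝ × ℝ, HasFDerivAt (fun v => ∫ x, FCSaux.gfun q Q m x v)
      (∫ x, fderiv ℝ (FCSaux.gfun q Q m x) v₀) v₀ := fun v₀ =>
    FCSaux.hasFDerivAt_int hGc hdiff1 hDGc hgzero hbound1 v₀
  have hF2 : ∀ v₀ : ℝ × ℝ, HasFDerivAt (fun v => ∫ x, fderiv ℝ (FCSaux.gfun q Q m x) v)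
      (∫ x, fderiv ℝ (fderiv ℝ (FCSaux.gfun q Q m x)) v₀) v₀ := fun v₀ =>
    FCSaux.hasFDerivAt_int hDGc hdiff2 hD2Gc hDgzero hbound2 v₀
  have hfdF : fderiv ℝ (fun v => ∫ x, FCSaux.gfun q Q m x v)
      = fun v => ∫ x, fderiv ℝ (FCSaux.gfun q Q m x) v := funext fun v => (hF1 v).fderiv
  have hfdF1 : fderiv ℝ (fun v => ∫ x, fderiv ℝ (FCSaux.gfun q Q m x) v)
      = fun v => ∫ x, fderiv ℝ (fderiv ℝ (FCSaux.gfun q Q m x)) v :=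
    funext fun v => (hF2 v).fderiv
  -- identifying the function in the statement
  have hFeq : (fun py : ℝ × ℝ => partialFT Q py * (q (py.1 / m) : ℂ))
      = fun v => ∫ x, FCSaux.gfun q Q m x v := by
    funext v
    simp only [partialFT]
    rw [← integral_mul_const]
    congr 1
    funext x
    simp only [FCSaux.gfun]
  rw [hFeq]
  -- bounding the three suprema
  have hsupT0 : (⨆ v, ‖iteratedFDeriv ℝ 0 (fun v => ∫ x, FCSaux.gfun q Q m x v) v‖)
      ≤ 2 * L * (S * c0) := by
    refine Real.iSup_le (fun v => ?_) (by positivity)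
    rw [norm_iteratedFDeriv_zero]
    refine FCSaux.norm_int_le hL.le (hGc.comp (continuous_id.prodMk continuous_const))
      (fun x hx => congrFun (hgzero x hx) v) (fun x hx => ?_)
    exact FCSaux.norm_g_le m hc0 hS0 x v
  have hsupT1 : (⨆ v, ‖iteratedFDeriv ℝ 1 (fun v => ∫ x, FCSaux.gfun q Q m x v) v‖)
      ≤ 2 * L * ((L * S * c0 + S * c1) + S * c0) := by
    have hBnn : 0 ≤ (L * S * c0 + S * c1) + S * c0 :=
      (norm_nonneg _).trans (hbound1 0 (by constructor <;> linarith) 0)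
    refine Real.iSup_le (fun v => ?_) (by positivity)
    have e : ‖iteratedFDeriv ℝ 1 (fun v => ∫ x, FCSaux.gfun q Q m x v) v‖
        = ‖fderiv ℝ (fun v => ∫ x, FCSaux.gfun q Q m x v) v‖ := by
      rw [← norm_iteratedFDeriv_fderiv, norm_iteratedFDeriv_zero]
    rw [e, hfdF]
    refine FCSaux.norm_int_le hL.le (hDGc.comp (continuous_id.prodMk continuous_const))
      (fun x hx => ?_) (fun x hx => hbound1 x hx v)
    rw [hDgzero x hx]; rfl
  have hsupT2 : (⨆ v, ‖iteratedFDeriv ℝ 2 (fun v => ∫ x, FCSaux.gfun q Q m x v) v‖)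
      ≤ 2 * L * (((L * L * S * c0 + 2 * (L * S * c1) + S * c2) + (L * S * c0 + S * c1))
          + ((L * S * c0 + S * c1) + S * c0)) := by
    have hBnn : 0 ≤ ((L * L * S * c0 + 2 * (L * S * c1) + S * c2) + (L * S * c0 + S * c1))
        + ((L * S * c0 + S * c1) + S * c0) :=
      (hbound2 0 (by constructor <;> linarith) 0).trans' (ContinuousLinearMap.opNorm_nonneg _)
    refine Real.iSup_le (fun v => ?_) (by positivity)
    have e : ‖iteratedFDeriv ℝ 2 (fun v => ∫ x, FCSaux.gfun q Q m x v) v‖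
        = ‖fderiv ℝ (fderiv ℝ (fun v => ∫ x, FCSaux.gfun q Q m x v)) v‖ := by
      rw [← norm_iteratedFDeriv_fderiv, ← norm_iteratedFDeriv_fderiv,
        norm_iteratedFDeriv_zero]
    rw [e, hfdF, hfdF1]
    refine FCSaux.norm_int_le hL.le (hD2Gc.comp (continuous_id.prodMk continuous_const))
      (fun x hx => ?_) (fun x hx => hbound2 x hx v)
    have h0 : fderiv ℝ (fderiv ℝ (FCSaux.gfun q Q m x)) = 0 := by
      rw [hDgzero x hx]
      exact FCSaux.fderiv_zero_fun
    rw [h0]; rfl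
  -- final arithmetic
  have hsob : sobNormTwo (fun v => ∫ x, FCSaux.gfun q Q m x v)
      = (⨆ v, ‖iteratedFDeriv ℝ 0 (fun v => ∫ x, FCSaux.gfun q Q m x v) v‖)
      + (⨆ v, ‖iteratedFDeriv ℝ 1 (fun v => ∫ x, FCSaux.gfun q Q m x v) v‖)
      + (⨆ v, ‖iteratedFDeriv ℝ 2 (fun v => ∫ x, FCSaux.gfun q Q m x v) v‖) := by
    simp only [sobNormTwo]
    rw [Finset.sum_range_succ, Finset.sum_range_succ, Finset.sum_range_one]
  rw [hsob]
  have heq : 2 * L * (S * c0) + 2 * L * ((L * S * c0 + S * c1) + S * c0)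
      + 2 * L * (((L * L * S * c0 + 2 * (L * S * c1) + S * c2) + (L * S * c0 + S * c1))
          + ((L * S * c0 + S * c1) + S * c0)) = (2 * L * K) * S := by
    simp only [hK_def]
    ring
  have hfin : (2 * L * K) * S ≤ (1 + 2 * L * K) * S :=
    mul_le_mul_of_nonneg_right (by linarith) hSnn
  linarith
end

section
/- Chebyshev difference-quotient identity against the semicircle law (equation (3.12) of the paper): For every integer n≥1 and every x∈ℝ, ∫_{−2}^2 (P_n(x)−P_n(y))/(x−y) · ρ(y) dy = P_{n−1}(x), where P_n(x)=U_n(x/2) with U_n the Chebyshev polynomial of the second kind. (The integrand extends to a polynomial in y, so the integral is absolutely convergent; for n=0 the left-hand side is 0.) -/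
open MeasureTheory Real

/-- The semicircle density. -/
noncomputable def semicircle (x : ℝ) : ℝ := Real.sqrt (max (4 - x ^ 2) 0) / (2 * Real.pi)

/-- The rescaled Chebyshev polynomials of the second kind, `P_n(x) = U_n(x/2)`. -/
noncomputable def chebP (n : ℕ) (x : ℝ) : ℝ :=
  (Polynomial.Chebyshev.U ℝ (n : ℤ)).eval (x / 2)

/-- Integer-indexed version. -/
noncomputable def chebQ (m : ℤ) (x : ℝ) : ℝ :=
  (Polynomial.Chebyshev.U ℝ m).eval (x / 2)

lemma chebQ_zero (x : ℝ) : chebQ 0 x = 1 := by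
  simp [chebQ, Polynomial.Chebyshev.U_zero]

lemma chebQ_neg_one (x : ℝ) : chebQ (-1) x = 0 := by
  simp [chebQ, Polynomial.Chebyshev.U_neg_one]

lemma chebQ_one (x : ℝ) : chebQ 1 x = x := by
  unfold chebQ
  rw [Polynomial.Chebyshev.U_one]
  simp only [Polynomial.eval_mul, Polynomial.eval_ofNat, Polynomial.eval_X]
  ring

lemma chebQ_rec (m : ℤ) (x : ℝ) : chebQ (m + 2) x = x * chebQ (m + 1) x - chebQ m x := by
  unfold chebQ
  rw [Polynomial.Chebyshev.U_add_two]
  simp only [Polynomial.eval_sub, Polynomial.eval_mul, Polynomial.eval_ofNat, Polynomial.eval_X]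
  ring

lemma chebQ_continuous (m : ℤ) : Continuous (chebQ m) := by
  unfold chebQ
  fun_prop

lemma semicircle_continuous : Continuous semicircle := by
  unfold semicircle
  fun_prop

/-- Divided-difference sum identity. -/
lemma sum_id (n : ℕ) (x y : ℝ) :
    chebQ n x - chebQ n y =
      (x - y) * ∑ j ∈ Finset.range n, chebQ j x * chebQ ((n : ℤ) - 1 - j) y := by
  induction n using Nat.strong_induction_on with
  | _ n ih =>
    match n, ih with
    | 0, _ => simp [chebQ_zero]
    | 1, _ => simp [chebQ_one, chebQ_zero]
    | (n + 2), ih =>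
      have ih1 := ih (n + 1) (by omega)
      have ih0 := ih n (by omega)
      push_cast at ih1 ih0 ⊢
      -- normalize index arguments in the sums
      have hg : ∀ j ∈ Finset.range (n + 2),
          chebQ j x * chebQ ((n : ℤ) + 2 - 1 - j) y = chebQ j x * chebQ ((n : ℤ) + 1 - j) y := by
        intro j _
        have : (n : ℤ) + 2 - 1 - j = (n : ℤ) + 1 - j := by ring
        rw [this]
      have hg1 : ∀ j ∈ Finset.range (n + 1),
          chebQ j x * chebQ ((n : ℤ) + 1 - 1 - j) y = chebQ j x * chebQ ((n : ℤ) - j) y := by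
        intro j _
        have : (n : ℤ) + 1 - 1 - j = (n : ℤ) - j := by ring
        rw [this]
      rw [Finset.sum_congr rfl hg]
      rw [Finset.sum_congr rfl hg1] at ih1
      -- the sum recurrence
      have hS : (∑ j ∈ Finset.range (n + 2), chebQ j x * chebQ ((n : ℤ) + 1 - j) y)
          = x * (∑ j ∈ Finset.range (n + 1), chebQ j x * chebQ ((n : ℤ) - j) y)
            - (∑ j ∈ Finset.range n, chebQ j x * chebQ ((n : ℤ) - 1 - j) y)
            + chebQ ((n : ℤ) + 1) y := by
        rw [Finset.sum_range_succ' (fun j : ℕ => chebQ j x * chebQ ((n : ℤ) + 1 - j) y) (n + 1)]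
        have t0 : chebQ ((0 : ℕ) : ℤ) x * chebQ ((n : ℤ) + 1 - ((0 : ℕ) : ℤ)) y
            = chebQ ((n : ℤ) + 1) y := by
          push_cast
          rw [chebQ_zero, sub_zero, one_mul]
        have tsum : ∀ k ∈ Finset.range (n + 1),
            chebQ ((k + 1 : ℕ) : ℤ) x * chebQ ((n : ℤ) + 1 - ((k + 1 : ℕ) : ℤ)) y
              = x * (chebQ k x * chebQ ((n : ℤ) - k) y)
                - chebQ ((k : ℤ) - 1) x * chebQ ((n : ℤ) - k) y := by
          intro k _
          have h := chebQ_rec ((k : ℤ) - 1) x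
          have e1 : ((k : ℤ) - 1) + 2 = ((k + 1 : ℕ) : ℤ) := by push_cast; ring
          have e2 : ((k : ℤ) - 1) + 1 = (k : ℤ) := by ring
          rw [e1, e2] at h
          rw [h]
          have e3 : ((n : ℤ) + 1 - ((k + 1 : ℕ) : ℤ)) = (n : ℤ) - k := by push_cast; ring
          rw [e3]
          ring
        rw [Finset.sum_congr rfl tsum, t0]
        rw [Finset.sum_sub_distrib, ← Finset.mul_sum]
        have e4 : ∑ k ∈ Finset.range (n + 1), chebQ ((k : ℤ) - 1) x * chebQ ((n : ℤ) - k) y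
            = ∑ j ∈ Finset.range n, chebQ j x * chebQ ((n : ℤ) - 1 - j) y := by
          rw [Finset.sum_range_succ' (fun k : ℕ => chebQ ((k : ℤ) - 1) x * chebQ ((n : ℤ) - k) y) n]
          have t0' : chebQ (((0 : ℕ) : ℤ) - 1) x * chebQ ((n : ℤ) - ((0 : ℕ) : ℤ)) y = 0 := by
            push_cast
            simp [chebQ_neg_one]
          rw [t0', add_zero]
          apply Finset.sum_congr rfl
          intro k _
          have e5 : ((k + 1 : ℕ) : ℤ) - 1 = (k : ℤ) := by push_cast; ring
          have e6 : (n : ℤ) - ((k + 1 : ℕ) : ℤ) = (n : ℤ) - 1 - k := by push_cast; ring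
          rw [e5, e6]
        rw [e4]
      rw [hS, chebQ_rec (n : ℤ) x, chebQ_rec (n : ℤ) y]
      linear_combination x * ih1 - ih0

lemma integral_cos_k (k : ℕ) (hk : 1 ≤ k) : ∫ θ in (0:ℝ)..π, Real.cos (k * θ) = 0 := by
  have hc : (k : ℝ) ≠ 0 := by positivity
  rw [intervalIntegral.integral_comp_mul_left (fun x => Real.cos x) hc]
  simp [integral_cos, Real.sin_nat_mul_pi]

lemma moment (m : ℕ) :
    ∫ y in Set.Ioo (-2 : ℝ) 2, chebQ m y * semicircle y = if m = 0 then 1 else 0 := by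
  have hle : (-2 : ℝ) ≤ 2 := by norm_num
  rw [← MeasureTheory.integral_Ioc_eq_integral_Ioo, ← intervalIntegral.integral_of_le hle]
  -- substitution y = 2 cos θ
  have key : (∫ x in (0:ℝ)..π, (-(2 * Real.sin x)) • ((fun y => chebQ m y * semicircle y) ∘
        (fun θ => 2 * Real.cos θ)) x)
      = ∫ y in (2 * Real.cos 0)..(2 * Real.cos π), chebQ m y * semicircle y := by
    apply intervalIntegral.integral_comp_smul_deriv
    · intro θ _
      simpa using ((Real.hasDerivAt_cos θ).const_mul (2:ℝ))
    · fun_prop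
    · exact (chebQ_continuous m).mul semicircle_continuous
  rw [Real.cos_zero, Real.cos_pi] at key
  norm_num at key
  rw [intervalIntegral.integral_symm (2:ℝ) (-2:ℝ), ← key, neg_neg]
  -- pointwise identity on [0, π]
  have hpt : ∀ θ ∈ Set.uIcc (0:ℝ) π,
      2 * Real.sin θ * (chebQ m (2 * Real.cos θ) * semicircle (2 * Real.cos θ))
        = (Real.cos (m * θ) - Real.cos ((m + 2) * θ)) / π := by
    intro θ hθ
    rw [Set.uIcc_of_le Real.pi_nonneg] at hθ
    have hs : 0 ≤ Real.sin θ := Real.sin_nonneg_of_nonneg_of_le_pi hθ.1 hθ.2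
    have h1 : chebQ m (2 * Real.cos θ) = (Polynomial.Chebyshev.U ℝ m).eval (Real.cos θ) := by
      unfold chebQ; norm_num
    have h2 : semicircle (2 * Real.cos θ) = Real.sin θ / π := by
      unfold semicircle
      have e : max (4 - (2 * Real.cos θ) ^ 2) 0 = (2 * Real.sin θ) ^ 2 := by
        rw [max_eq_left]
        · nlinarith [Real.sin_sq_add_cos_sq θ]
        · nlinarith [Real.sin_sq_add_cos_sq θ]
      rw [e, Real.sqrt_sq (by linarith)]
      field_simp
    rw [h1, h2]
    have h3 : Real.cos (m * θ) - Real.cos ((m + 2) * θ)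
        = 2 * Real.sin ((m + 1) * θ) * Real.sin θ := by
      rw [Real.cos_sub_cos]
      have e1 : ((m : ℝ) * θ + (m + 2) * θ) / 2 = ((m : ℝ) + 1) * θ := by ring
      have e2 : ((m : ℝ) * θ - (m + 2) * θ) / 2 = -θ := by ring
      rw [e1, e2, Real.sin_neg]
      ring
    have h4 : (Polynomial.Chebyshev.U ℝ m).eval (Real.cos θ) * Real.sin θ
        = Real.sin (((m : ℝ) + 1) * θ) := by
      have := Polynomial.Chebyshev.U_real_cos θ (m : ℤ)
      push_cast at this
      exact this
    rw [h3, ← h4]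
    ring
  rw [intervalIntegral.integral_congr hpt]
  by_cases hm : m = 0
  · subst hm
    norm_num
    have h2 : ∫ θ in (0:ℝ)..π, Real.cos (2 * θ) = 0 := by
      have h := integral_cos_k 2 (by norm_num)
      push_cast at h
      exact h
    rw [intervalIntegral.integral_sub (by apply Continuous.intervalIntegrable; fun_prop)
      (by apply Continuous.intervalIntegrable; fun_prop), h2]
    simp [Real.pi_ne_zero]
  · simp only [hm, if_false]
    have e : ∀ θ ∈ Set.uIcc (0:ℝ) π, (Real.cos (m * θ) - Real.cos ((m + 2) * θ)) / π
        = π⁻¹ * Real.cos (m * θ) - π⁻¹ * Real.cos (((m+2):ℕ) * θ) := by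
      intro θ _
      push_cast
      ring
    rw [intervalIntegral.integral_congr e, intervalIntegral.integral_sub,
        intervalIntegral.integral_const_mul, intervalIntegral.integral_const_mul,
        integral_cos_k m (by omega), integral_cos_k (m + 2) (by omega)]
    · norm_num
    · apply Continuous.intervalIntegrable; fun_prop
    · apply Continuous.intervalIntegrable; fun_prop


/-- **Chebyshev difference-quotient identity against the semicircle law** (equation (3.12)).
For every `n ≥ 1` and every `x ∈ ℝ`,
`∫_{-2}^{2} (P_n(x) - P_n(y))/(x - y) ρ(y) dy = P_{n-1}(x)`.
(The integrand coincides a.e. with the polynomial divided difference of `P_n`, so the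
integral is absolutely convergent.) -/
theorem chebyshev_difference_quotient (n : ℕ) (hn : 1 ≤ n) (x : ℝ) :
    ∫ y in Set.Ioo (-2 : ℝ) 2, (chebP n x - chebP n y) / (x - y) * semicircle y
      = chebP (n - 1) x := by
  have hP : ∀ (m : ℕ) (z : ℝ), chebP m z = chebQ m z := fun _ _ => rfl
  have hae : (fun y => (chebP n x - chebP n y) / (x - y) * semicircle y)
      =ᵐ[volume.restrict (Set.Ioo (-2 : ℝ) 2)]
      (fun y => ∑ j ∈ Finset.range n, chebQ j x * (chebQ ((n : ℤ) - 1 - j) y * semicircle y)) := by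
    apply ae_restrict_of_ae
    have hx : ∀ᵐ (y : ℝ), y ≠ x := by
      rw [MeasureTheory.ae_iff]
      have hs : {y : ℝ | ¬ y ≠ x} = {x} := by ext y; simp
      rw [hs]
      exact measure_singleton x
    filter_upwards [hx] with y hy
    have hxy : x - y ≠ 0 := sub_ne_zero.mpr (fun h => hy h.symm)
    rw [hP, hP, sum_id n x y, mul_comm (x - y), mul_div_assoc, div_self hxy, mul_one]
    rw [Finset.sum_mul]
    congr 1
    ext j
    ring
  rw [integral_congr_ae hae]
  have hint : ∀ j : ℕ, IntegrableOn
      (fun y => chebQ j x * (chebQ ((n : ℤ) - 1 - j) y * semicircle y)) (Set.Ioo (-2 : ℝ) 2) := by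
    intro j
    have hc : Continuous (fun y => chebQ j x * (chebQ ((n : ℤ) - 1 - j) y * semicircle y)) := by
      exact continuous_const.mul ((chebQ_continuous _).mul semicircle_continuous)
    exact (hc.integrableOn_Icc (a := (-2:ℝ)) (b := 2)).mono_set Set.Ioo_subset_Icc_self
  rw [MeasureTheory.integral_finset_sum _ (fun j _ => hint j)]
  have hterm : ∀ j ∈ Finset.range n,
      (∫ y in Set.Ioo (-2 : ℝ) 2, chebQ j x * (chebQ ((n : ℤ) - 1 - j) y * semicircle y))
        = chebQ j x * (if j = n - 1 then 1 else 0) := by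
    intro j hj
    rw [Finset.mem_range] at hj
    rw [MeasureTheory.integral_const_mul]
    have hidx : (n : ℤ) - 1 - j = ((n - 1 - j : ℕ) : ℤ) := by omega
    rw [hidx, moment (n - 1 - j)]
    congr 1
    have : n - 1 - j = 0 ↔ j = n - 1 := by omega
    simp [this]
  rw [Finset.sum_congr rfl hterm]
  have : ∀ j ∈ Finset.range n, chebQ j x * (if j = n - 1 then 1 else 0)
      = if j = n - 1 then chebQ j x else 0 := by
    intro j _
    split <;> simp
  rw [Finset.sum_congr rfl this, Finset.sum_ite_eq' (Finset.range n) (n - 1) (fun j => chebQ j x)]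
  have hmem : n - 1 ∈ Finset.range n := Finset.mem_range.mpr (by omega)
  rw [if_pos hmem]
  rfl
end
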